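/- Let ‖·‖ be a norm on c₀₀ satisfying equation (2.2). Let 1 ≤ p < ∞, k, m, ℓ ∈ ℕ and let x ∈ c₀₀ be an ℓ_p^k-average with constant 2. Then: (a) |||x|||_m ≤ 4m^{−1/p} + k^{−1/p}; (b) ‖x‖_ℓ ≤ (1/f(ℓ))·[C_p + 2ℓ·k^{−1/p}], where C_p = 4(1 − 2^{−1/p})^{−1}. -/

import Mathlib

open Finset

/-- `c₀₀`: finitely supported functions `ℕ → ℝ`. -/
abbrev C00 := ℕ →₀ ℝ

/-- `f(t) = log₂(1+t)`. -/
noncomputable def f (t : ℝ) : ℝ := Real.logb 2 (1 + t)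

/-- `E < F` for finite sets: every element of `E` is less than every element of `F`. -/
def FinsetLT (E F : Finset ℕ) : Prop := ∀ i ∈ E, ∀ j ∈ F, i < j

/-- `Ex`: coordinatewise product of `x` with the indicator of `E`. -/
noncomputable def restr (E : Finset ℕ) (x : C00) : C00 := x.filter (· ∈ E)

/-- `N` is a norm on `c₀₀`. -/
def IsNorm (N : C00 → ℝ) : Prop :=
  (∀ x y, N (x + y) ≤ N x + N y) ∧
  (∀ (c : ℝ) (x), N (c • x) = |c| * N x) ∧
  (∀ x, x ≠ 0 → 0 < N x)

/-- the sup norm `‖x‖_∞`. -/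
noncomputable def supNorm (x : C00) : ℝ := ⨆ i, |x i|

/-- `((m_i, E_i))_{i=1}^ℓ` is admissible: `2 ≤ m₁ < ⋯ < m_ℓ`, `E₁ < ⋯ < E_ℓ`,
and `f(m_{i+1}) > ∑_{j=1}^i |E_j|`. -/
def Admissible (ℓ : ℕ) (m : Fin ℓ → ℕ) (E : Fin ℓ → Finset ℕ) : Prop :=
  (∀ i, 2 ≤ m i) ∧ StrictMono m ∧
  (∀ i j : Fin ℓ, i < j → FinsetLT (E i) (E j)) ∧
  ∀ i j : Fin ℓ, (i : ℕ) + 1 = (j : ℕ) →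
    (∑ t ∈ Finset.Iic i, ((E t).card : ℝ)) < f (m j)

/-- `|||x|||_m = sup{(1/m) ∑_{i=1}^m ‖F_i x‖ : F₁ < ⋯ < F_m}`. -/
noncomputable def tnorm (N : C00 → ℝ) (m : ℕ) (x : C00) : ℝ :=
  sSup {r | ∃ F : Fin m → Finset ℕ,
    (∀ i j : Fin m, i < j → FinsetLT (F i) (F j)) ∧
    r = (1 / (m : ℝ)) * ∑ i, N (restr (F i) x)}

/-- `‖x‖_ℓ = sup{(1/f(ℓ)) ∑_{i=1}^ℓ |||E_i x|||_{m_i} : ((m_i,E_i))_{i=1}^ℓ admissible}`. -/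
noncomputable def normL (N : C00 → ℝ) (ℓ : ℕ) (x : C00) : ℝ :=
  sSup {r | ∃ (m : Fin ℓ → ℕ) (E : Fin ℓ → Finset ℕ), Admissible ℓ m E ∧
    r = (1 / f ℓ) * ∑ i, tnorm N (m i) (restr (E i) x)}

/-- `‖x‖_{(ℓ,m₀)}`: as `‖x‖_ℓ` but restricted to admissible families with `m₁ ≥ m₀`. -/
noncomputable def normLM (N : C00 → ℝ) (ℓ m₀ : ℕ) (x : C00) : ℝ :=
  sSup {r | ∃ (m : Fin ℓ → ℕ) (E : Fin ℓ → Finset ℕ), Admissible ℓ m E ∧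
    (∀ i, m₀ ≤ m i) ∧
    r = (1 / f ℓ) * ∑ i, tnorm N (m i) (restr (E i) x)}

/-- Equation (2.2):
`‖x‖ = max{‖x‖_∞, sup{(1/f(ℓ)) ∑ |||E_i x|||_{m_i} : ℓ ∈ ℕ, ((m_i,E_i)) admissible}}`. -/
def Eq22 (N : C00 → ℝ) : Prop :=
  ∀ x, N x = max (supNorm x)
    (sSup {r | ∃ (ℓ : ℕ) (m : Fin ℓ → ℕ) (E : Fin ℓ → Finset ℕ), Admissible ℓ m E ∧
      r = (1 / f ℓ) * ∑ i, tnorm N (m i) (restr (E i) x)})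

/-- A finite block basis: nonzero vectors with successive supports. -/
def BlockSeqFin {n : ℕ} (y : Fin n → C00) : Prop :=
  (∀ i, y i ≠ 0) ∧ ∀ i j : Fin n, i < j → FinsetLT (y i).support (y j).support

/-- An infinite block basis of `(e_i)`: nonzero vectors with successive supports. -/
def BlockSeqInf (y : ℕ → C00) : Prop :=
  (∀ i, y i ≠ 0) ∧ ∀ i, FinsetLT (y i).support (y (i + 1)).support

/-- `(z_k)_{k=1}^n` is a (finite) block basis of `(y_i)`. -/
def FiniteBlockOf {n : ℕ} (z : Fin n → C00) (y : ℕ → C00) : Prop :=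
  ∃ (B : Fin n → Finset ℕ) (c : ℕ → ℝ),
    (∀ k k' : Fin n, k < k' → FinsetLT (B k) (B k')) ∧
    (∀ k, z k = ∑ i ∈ B k, c i • y i) ∧ ∀ k, z k ≠ 0

/-- `x` is an `ℓ_p^k`-average with constant `C`. -/
def IsLpAverage (N : C00 → ℝ) (p : ℝ) (k : ℕ) (C : ℝ) (x : C00) : Prop :=
  ∃ y : Fin k → C00, BlockSeqFin y ∧ (∀ i, N (y i) = 1) ∧
    (∀ a : Fin k → ℝ,
      C⁻¹ * (∑ i, |a i| ^ p) ^ (1 / p) ≤ N (∑ i, a i • y i) ∧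
      N (∑ i, a i • y i) ≤ C * (∑ i, |a i| ^ p) ^ (1 / p)) ∧
    x = ((k : ℝ) ^ (-(1 / p))) • ∑ i, y i

/-- `C_p = 4(1 - 2^{-1/p})⁻¹`. -/
noncomputable def Cp (p : ℝ) : ℝ := 4 * (1 - (2 : ℝ) ^ (-(1 / p)))⁻¹

section Aux

lemma restr_apply (E : Finset ℕ) (x : C00) (i : ℕ) :
    restr E x i = if i ∈ E then x i else 0 := by
  simp [restr, Finsupp.filter_apply]

lemma restr_restr (E F : Finset ℕ) (x : C00) : restr E (restr F x) = restr (E ∩ F) x := by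
  ext i; simp only [restr_apply, Finset.mem_inter]
  by_cases h1 : i ∈ E <;> by_cases h2 : i ∈ F <;> simp [h1, h2]

lemma restr_empty (x : C00) : restr ∅ x = 0 := by
  ext i; simp [restr_apply]

lemma restr_zero (E : Finset ℕ) : restr E 0 = 0 := by
  ext i; simp [restr_apply]

lemma restr_smul (E : Finset ℕ) (c : ℝ) (x : C00) : restr E (c • x) = c • restr E x := by
  ext i; simp only [restr_apply, Finsupp.smul_apply]
  by_cases h : i ∈ E <;> simp [h]

lemma restr_sum {α : Type*} (E : Finset ℕ) (s : Finset α) (g : α → C00) :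
    restr E (∑ a ∈ s, g a) = ∑ a ∈ s, restr E (g a) := by
  ext i; simp only [restr_apply, sum_apply']
  by_cases h : i ∈ E <;> simp [h, restr_apply]

lemma restr_support (E : Finset ℕ) (x : C00) : (restr E x).support ⊆ x.support := by
  intro i hi
  simp only [Finsupp.mem_support_iff, restr_apply] at hi ⊢
  by_cases h : i ∈ E <;> simp [h] at hi; exact hi

lemma restr_eq_self (E : Finset ℕ) (x : C00) (h : x.support ⊆ E) : restr E x = x := by
  ext i; rw [restr_apply]
  by_cases hi : i ∈ E
  · simp [hi]
  · simp only [hi, if_false]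
    by_contra hx
    exact hi (h (Finsupp.mem_support_iff.2 fun h0 => hx h0.symm))

lemma restr_eq_zero (E : Finset ℕ) (x : C00) (h : ∀ i ∈ x.support, i ∉ E) : restr E x = 0 := by
  ext i; rw [restr_apply]
  by_cases hi : i ∈ E
  · simp only [hi, if_true, Finsupp.coe_zero, Pi.zero_apply]
    by_contra hx
    exact h i (Finsupp.mem_support_iff.2 hx) hi
  · simp [hi]

lemma finsetLT_mono {A B A' B' : Finset ℕ} (h : FinsetLT A B) (hA : A' ⊆ A) (hB : B' ⊆ B) :
    FinsetLT A' B' := fun i hi j hj => h i (hA hi) j (hB hj)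

variable {N : C00 → ℝ}

lemma N_zero (hN : IsNorm N) : N 0 = 0 := by
  have := hN.2.1 0 0
  simpa using this

lemma N_nonneg (hN : IsNorm N) (z : C00) : 0 ≤ N z := by
  have h1 := hN.1 z (-z)
  have h2 : N (-z) = N z := by
    have := hN.2.1 (-1) z
    simpa using this
  have h3 : z + -z = 0 := by abel
  rw [h3, N_zero hN, h2] at h1
  linarith

lemma N_sum (hN : IsNorm N) {α : Type*} (s : Finset α) (g : α → C00) :
    N (∑ a ∈ s, g a) ≤ ∑ a ∈ s, N (g a) := by
  classical
  induction s using Finset.induction_on with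
  | empty => simp [N_zero hN]
  | @insert a s' h ih =>
    rw [Finset.sum_insert h, Finset.sum_insert h]
    exact le_trans (hN.1 _ _) (by linarith)

/-- crude bound for `N` in terms of coordinates -/
noncomputable def MM (N : C00 → ℝ) (z : C00) : ℝ :=
  ∑ i ∈ z.support, |z i| * N (Finsupp.single i 1)

lemma MM_nonneg (hN : IsNorm N) (z : C00) : 0 ≤ MM N z :=
  Finset.sum_nonneg fun i _ => mul_nonneg (abs_nonneg _) (N_nonneg hN _)

lemma N_le_MM (hN : IsNorm N) (z : C00) : N z ≤ MM N z := by
  have hz : z = ∑ i ∈ z.support, Finsupp.single i (z i) := by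
    conv_lhs => rw [← Finsupp.sum_single z]
    rfl
  calc N z = N (∑ i ∈ z.support, Finsupp.single i (z i)) := by rw [← hz]
    _ ≤ ∑ i ∈ z.support, N (Finsupp.single i (z i)) := N_sum hN _ _
    _ = MM N z := by
        apply Finset.sum_congr rfl
        intro i _
        have : Finsupp.single i (z i) = (z i) • Finsupp.single i (1 : ℝ) := by
          rw [Finsupp.smul_single']; simp
        rw [this, hN.2.1]

lemma N_restr_le_MM (hN : IsNorm N) (E : Finset ℕ) (z : C00) : N (restr E z) ≤ MM N z := by
  refine le_trans (N_le_MM hN _) ?_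
  unfold MM
  have h1 : ∑ i ∈ (restr E z).support, |(restr E z) i| * N (Finsupp.single i 1)
      = ∑ i ∈ (restr E z).support, |z i| * N (Finsupp.single i 1) := by
    apply Finset.sum_congr rfl
    intro i hi
    have hiE : i ∈ E := by
      by_contra hc
      simp [Finsupp.mem_support_iff, restr_apply, hc] at hi
    rw [restr_apply, if_pos hiE]
  rw [h1]
  exact Finset.sum_le_sum_of_subset_of_nonneg (restr_support E z)
    (fun i _ _ => mul_nonneg (abs_nonneg _) (N_nonneg hN _))

end Aux

section Aux2

variable {N : C00 → ℝ}

lemma tnorm_nonneg (hN : IsNorm N) (m : ℕ) (z : C00) : 0 ≤ tnorm N m z := by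
  apply Real.sSup_nonneg
  rintro r ⟨F, _, rfl⟩
  exact mul_nonneg (by positivity) (Finset.sum_nonneg fun i _ => N_nonneg hN _)

lemma tnorm_le (hN : IsNorm N) {m : ℕ} {z : C00} {B : ℝ} (hB : 0 ≤ B)
    (h : ∀ F : Fin m → Finset ℕ, (∀ i j : Fin m, i < j → FinsetLT (F i) (F j)) →
      (1 / (m : ℝ)) * ∑ i, N (restr (F i) z) ≤ B) : tnorm N m z ≤ B := by
  apply Real.sSup_le _ hB
  rintro r ⟨F, hF, rfl⟩
  exact h F hF

lemma tnorm_restr_le_MM (hN : IsNorm N) (m : ℕ) (E : Finset ℕ) (z : C00) :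
    tnorm N m (restr E z) ≤ MM N z := by
  refine tnorm_le hN (MM_nonneg hN z) ?_
  intro F _
  have hsum : ∑ i, N (restr (F i) (restr E z)) ≤ ∑ _i : Fin m, MM N z :=
    Finset.sum_le_sum fun i _ => by
      rw [restr_restr]; exact N_restr_le_MM hN _ z
  have : (1 / (m : ℝ)) * ∑ i, N (restr (F i) (restr E z)) ≤ (1 / (m : ℝ)) * (m * MM N z) := by
    apply mul_le_mul_of_nonneg_left _ (by positivity)
    simpa using hsum
  refine this.trans ?_
  rcases Nat.eq_zero_or_pos m with hm | hm
  · simp [hm, MM_nonneg hN z]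
  · have : (m : ℝ) ≠ 0 := Nat.cast_ne_zero.2 hm.ne'
    rw [one_div, inv_mul_cancel_left₀ this]

lemma tnorm_zero_le (hN : IsNorm N) (m : ℕ) : tnorm N m 0 ≤ 0 := by
  refine tnorm_le hN le_rfl ?_
  intro F _
  simp [restr_zero, N_zero hN]

lemma f_nonneg (ℓ : ℕ) : 0 ≤ f ℓ := by
  apply Real.logb_nonneg one_lt_two
  have : (0:ℝ) ≤ ℓ := Nat.cast_nonneg ℓ
  linarith

lemma one_le_f {ℓ : ℕ} (hℓ : 1 ≤ ℓ) : 1 ≤ f ℓ := by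
  have h2 : (2:ℝ) ≤ 1 + ℓ := by
    have : (1:ℝ) ≤ ℓ := by exact_mod_cast hℓ
    linarith
  have := Real.logb_le_logb_of_le (b := 2) (by norm_num) (by norm_num : (0:ℝ) < 2) h2
  rwa [Real.logb_self_eq_one (by norm_num)] at this

lemma supNorm_restr_le (z : C00) (E : Finset ℕ) : supNorm (restr E z) ≤ supNorm z := by
  apply ciSup_le
  intro i
  have h1 : |restr E z i| ≤ |z i| := by
    rw [restr_apply]; by_cases h : i ∈ E <;> simp [h, abs_nonneg]
  refine h1.trans ?_
  apply le_ciSup (f := fun i => |z i|)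
  refine ⟨∑ j ∈ z.support, |z j|, ?_⟩
  rintro r ⟨j, rfl⟩
  by_cases hj : j ∈ z.support
  · exact Finset.single_le_sum (fun i _ => abs_nonneg (z i)) hj
  · simp only [Finsupp.mem_support_iff, not_not] at hj
    simp only [hj, abs_zero]
    exact Finset.sum_nonneg fun i _ => abs_nonneg _

/-- the set in Eq22 -/
def eqSet (N : C00 → ℝ) (z : C00) : Set ℝ :=
  {r | ∃ (ℓ : ℕ) (m : Fin ℓ → ℕ) (E : Fin ℓ → Finset ℕ), Admissible ℓ m E ∧
      r = (1 / f ℓ) * ∑ i, tnorm N (m i) (restr (E i) z)}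

lemma eqSet_bddAbove (hN : IsNorm N) (z : C00) : BddAbove (eqSet N z) := by
  classical
  refine ⟨(z.support.card : ℝ) * MM N z, ?_⟩
  rintro r ⟨ℓ, m, E, hadm, rfl⟩
  have hMM := MM_nonneg hN z
  have hcard : (0:ℝ) ≤ (z.support.card : ℝ) * MM N z := by positivity
  rcases Nat.eq_zero_or_pos ℓ with hℓ | hℓ
  · subst hℓ; simpa using hcard
  -- bound the sum
  set T : Finset (Fin ℓ) := Finset.univ.filter (fun i => ¬ Disjoint (E i) z.support) with hT
  have hterm : ∀ i : Fin ℓ, tnorm N (m i) (restr (E i) z) ≤ if i ∈ T then MM N z else 0 := by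
    intro i
    by_cases hi : i ∈ T
    · simpa [hi] using tnorm_restr_le_MM hN (m i) (E i) z
    · rw [if_neg hi]
      have hdis : Disjoint (E i) z.support := by
        by_contra hc
        exact hi (Finset.mem_filter.2 ⟨Finset.mem_univ i, hc⟩)
      have : restr (E i) z = 0 := restr_eq_zero _ _ (fun j hj hjE =>
        (Finset.disjoint_left.1 hdis) hjE hj)
      rw [this]
      exact tnorm_zero_le hN (m i)
  have hTcard : T.card ≤ z.support.card := by
    have : ∀ i ∈ T, ∃ j, j ∈ E i ∩ z.support := by
      intro i hi
      simp only [hT, Finset.mem_filter] at hi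
      rcases Finset.not_disjoint_iff.1 hi.2 with ⟨j, hj1, hj2⟩
      exact ⟨j, Finset.mem_inter.2 ⟨hj1, hj2⟩⟩
    choose φ hφ using this
    apply Finset.card_le_card_of_injOn (fun i => if h : i ∈ T then φ i h else 0)
    · intro i hi
      dsimp only; rw [dif_pos (Finset.mem_coe.1 hi)]
      exact (Finset.mem_inter.1 (hφ i hi)).2
    · intro i hi j hj hij
      simp only [Finset.mem_coe] at hi hj
      simp only [hi, hj, dif_pos] at hij
      by_contra hne
      have key : ∀ (a b : Fin ℓ) (ha : a ∈ T) (hb : b ∈ T), a < b → φ a ha ≠ φ b hb :=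
        fun a b ha hb hab =>
          (hadm.2.2.1 a b hab _ (Finset.mem_inter.1 (hφ a ha)).1 _
            (Finset.mem_inter.1 (hφ b hb)).1).ne
      rcases lt_or_gt_of_ne hne with h | h
      · exact key i j hi hj h hij
      · exact key j i hj hi h hij.symm
  -- now combine
  have hsum : ∑ i, tnorm N (m i) (restr (E i) z) ≤ (z.support.card : ℝ) * MM N z := by
    calc ∑ i, tnorm N (m i) (restr (E i) z) ≤ ∑ i, (if i ∈ T then MM N z else 0) :=
          Finset.sum_le_sum fun i _ => hterm i
      _ = (T.card : ℝ) * MM N z := by rw [Finset.sum_ite_mem, Finset.univ_inter,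
            Finset.sum_const, nsmul_eq_mul]
      _ ≤ (z.support.card : ℝ) * MM N z := by
          apply mul_le_mul_of_nonneg_right _ hMM
          exact_mod_cast hTcard
  have h1f' : 1 / f ℓ ≤ 1 := by
    have := one_le_f hℓ
    rw [div_le_one (by linarith)]
    linarith
  calc (1 / f ℓ) * ∑ i, tnorm N (m i) (restr (E i) z)
      ≤ 1 * ∑ i, tnorm N (m i) (restr (E i) z) := by
        apply mul_le_mul_of_nonneg_right h1f'
        exact Finset.sum_nonneg fun i _ => tnorm_nonneg hN _ _
    _ = ∑ i, tnorm N (m i) (restr (E i) z) := one_mul _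
    _ ≤ (z.support.card : ℝ) * MM N z := hsum

end Aux2

section Aux3

variable {N : C00 → ℝ}

lemma supNorm_le_N (hEq : Eq22 N) (z : C00) : supNorm z ≤ N z := by
  rw [hEq z]; exact le_max_left _ _

lemma sSup_eqSet_le_N (hEq : Eq22 N) (z : C00) : sSup (eqSet N z) ≤ N z := by
  rw [hEq z]; exact le_max_right _ _

lemma admissible_inter (ℓ : ℕ) (m : Fin ℓ → ℕ) (E : Fin ℓ → Finset ℕ) (G : Finset ℕ)
    (h : Admissible ℓ m E) : Admissible ℓ m (fun i => E i ∩ G) := by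
  obtain ⟨h1, h2, h3, h4⟩ := h
  refine ⟨h1, h2, ?_, ?_⟩
  · intro i j hij
    exact finsetLT_mono (h3 i j hij) (Finset.inter_subset_left) (Finset.inter_subset_left)
  · intro i j hij
    refine lt_of_le_of_lt ?_ (h4 i j hij)
    apply Finset.sum_le_sum
    intro t _
    exact_mod_cast Finset.card_le_card Finset.inter_subset_left

/-- Key monotonicity: restriction does not increase the norm. -/
lemma N_restr_le (hN : IsNorm N) (hEq : Eq22 N) (G : Finset ℕ) (z : C00) :
    N (restr G z) ≤ N z := by
  rw [hEq (restr G z)]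
  apply max_le
  · exact (supNorm_restr_le z G).trans (supNorm_le_N hEq z)
  · apply Real.sSup_le _ (N_nonneg hN z)
    rintro r ⟨ℓ, m, E, hadm, rfl⟩
    have hmem : (1 / f ℓ) * ∑ i, tnorm N (m i) (restr (E i) (restr G z)) ∈ eqSet N z := by
      refine ⟨ℓ, m, fun i => E i ∩ G, admissible_inter ℓ m E G hadm, ?_⟩
      congr 1
      apply Finset.sum_congr rfl
      intro i _
      rw [restr_restr]
    exact (le_csSup (eqSet_bddAbove hN z) hmem).trans (sSup_eqSet_le_N hEq z)

end Aux3

section Count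

open scoped Classical in
/-- indices whose support meets `I j` -/
noncomputable def Mset {k m : ℕ} (y : Fin k → C00) (I : Fin m → Finset ℕ) (j : Fin m) :
    Finset (Fin k) := univ.filter (fun i => ¬ Disjoint (y i).support (I j))

open scoped Classical in
/-- indices whose support meets `I j` and is contained in it -/
noncomputable def Aset {k m : ℕ} (y : Fin k → C00) (I : Fin m → Finset ℕ) (j : Fin m) :
    Finset (Fin k) := univ.filter (fun i => ¬ Disjoint (y i).support (I j) ∧ (y i).support ⊆ I j)

open scoped Classical in
/-- indices whose support meets `I j` but is not contained in it -/
noncomputable def Bset {k m : ℕ} (y : Fin k → C00) (I : Fin m → Finset ℕ) (j : Fin m) :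
    Finset (Fin k) := univ.filter (fun i => ¬ Disjoint (y i).support (I j) ∧ ¬ (y i).support ⊆ I j)

variable {k m : ℕ} {y : Fin k → C00} {I : Fin m → Finset ℕ}

lemma mem_Mset {j i} : i ∈ Mset y I j ↔ ¬ Disjoint (y i).support (I j) := by
  simp [Mset]

lemma mem_Aset {j i} : i ∈ Aset y I j ↔
    ¬ Disjoint (y i).support (I j) ∧ (y i).support ⊆ I j := by simp [Aset]

lemma mem_Bset {j i} : i ∈ Bset y I j ↔
    ¬ Disjoint (y i).support (I j) ∧ ¬ (y i).support ⊆ I j := by simp [Bset]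

lemma Aset_union_Bset (j : Fin m) : Aset y I j ∪ Bset y I j = Mset y I j := by
  ext i
  simp only [Finset.mem_union, mem_Aset, mem_Bset, mem_Mset]
  tauto

lemma Aset_disj_Bset (j : Fin m) : Disjoint (Aset y I j) (Bset y I j) := by
  rw [Finset.disjoint_left]
  intro i hi hi'
  rw [mem_Aset] at hi
  rw [mem_Bset] at hi'
  exact hi'.2 hi.2

lemma exists_mem_inter_of_mem_Mset {j i} (h : i ∈ Mset y I j) :
    ∃ t, t ∈ (y i).support ∧ t ∈ I j := by
  rw [mem_Mset] at h
  rcases Finset.not_disjoint_iff.1 h with ⟨t, h1, h2⟩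
  exact ⟨t, h1, h2⟩

/-- cross ordering -/
lemma Mset_cross (hy : BlockSeqFin y)
    (hILT : ∀ j j' : Fin m, j < j' → FinsetLT (I j) (I j'))
    {j j' : Fin m} (hjj : j < j') {i i' : Fin k}
    (hi : i ∈ Mset y I j) (hi' : i' ∈ Mset y I j') : i ≤ i' := by
  by_contra hlt
  push_neg at hlt
  obtain ⟨a, ha1, ha2⟩ := exists_mem_inter_of_mem_Mset hi
  obtain ⟨b, hb1, hb2⟩ := exists_mem_inter_of_mem_Mset hi'
  have h1 : b < a := hy.2 i' i hlt b hb1 a ha1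
  have h2 : a < b := hILT j j' hjj a ha2 b hb2
  omega

lemma Aset_sum_card (hy : BlockSeqFin y)
    (hILT : ∀ j j' : Fin m, j < j' → FinsetLT (I j) (I j')) :
    ∑ j, (Aset y I j).card ≤ k := by
  classical
  have hdisj : ∀ j ∈ (univ : Finset (Fin m)), ∀ j' ∈ (univ : Finset (Fin m)), j ≠ j' →
      Disjoint (Aset y I j) (Aset y I j') := by
    intro j _ j' _ hne
    rw [Finset.disjoint_left]
    intro i hi hi'
    rw [mem_Aset] at hi hi'
    obtain ⟨t, ht⟩ := (Finsupp.support_nonempty_iff.2 (hy.1 i))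
    have ht1 : t ∈ I j := hi.2 ht
    have ht2 : t ∈ I j' := hi'.2 ht
    rcases lt_or_gt_of_ne hne with h | h
    · exact lt_irrefl t (hILT j j' h t ht1 t ht2)
    · exact lt_irrefl t (hILT j' j h t ht2 t ht1)
  calc ∑ j, (Aset y I j).card = (univ.biUnion (Aset y I)).card :=
        (Finset.card_biUnion hdisj).symm
    _ ≤ k := by
        have := Finset.card_le_univ (univ.biUnion (Aset y I))
        simpa using this

lemma Bset_card_le_two (hy : BlockSeqFin y)
    (hconv : ∀ (j : Fin m), ∀ a ∈ I j, ∀ b ∈ I j, ∀ c : ℕ, a ≤ c → c ≤ b → c ∈ I j)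
    (j : Fin m) : (Bset y I j).card ≤ 2 := by
  classical
  rcases Finset.eq_empty_or_nonempty (Bset y I j) with h | h
  · simp [h]
  have hM : (Mset y I j).Nonempty := by
    obtain ⟨i, hi⟩ := h
    exact ⟨i, mem_Mset.2 (mem_Bset.1 hi).1⟩
  set lo := (Mset y I j).min' hM with hlo
  set hi' := (Mset y I j).max' hM with hhi
  have hsub : Bset y I j ⊆ {lo, hi'} := by
    intro i hiB
    have hiM : i ∈ Mset y I j := mem_Mset.2 (mem_Bset.1 hiB).1
    by_contra hc
    simp only [Finset.mem_insert, Finset.mem_singleton, not_or] at hc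
    have h1 : lo < i := lt_of_le_of_ne ((Mset y I j).min'_le i hiM) (Ne.symm hc.1)
    have h2 : i < hi' := lt_of_le_of_ne ((Mset y I j).le_max' i hiM) hc.2
    obtain ⟨a, ha1, ha2⟩ := exists_mem_inter_of_mem_Mset ((Mset y I j).min'_mem hM)
    obtain ⟨b, hb1, hb2⟩ := exists_mem_inter_of_mem_Mset ((Mset y I j).max'_mem hM)
    have hsupp : (y i).support ⊆ I j := by
      intro c hc'
      have hac : a < c := hy.2 lo i h1 a ha1 c hc'
      have hcb : c < b := hy.2 i hi' h2 c hc' b hb1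
      exact hconv j a ha2 b hb2 c hac.le hcb.le
    exact (mem_Bset.1 hiB).2 hsupp
  calc (Bset y I j).card ≤ ({lo, hi'} : Finset (Fin k)).card := Finset.card_le_card hsub
    _ ≤ 2 := by
      refine le_trans (Finset.card_insert_le _ _) ?_
      simp

lemma Mset_sum_card (hy : BlockSeqFin y)
    (hILT : ∀ j j' : Fin m, j < j' → FinsetLT (I j) (I j')) :
    ∑ j, (Mset y I j).card ≤ k + m := by
  classical
  set M' : Fin m → Finset (Fin k) := fun j =>
    if h : (Mset y I j).Nonempty then (Mset y I j).erase ((Mset y I j).max' h) else ∅ with hM'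
  have hcard : ∀ j, (Mset y I j).card ≤ (M' j).card + 1 := by
    intro j
    by_cases h : (Mset y I j).Nonempty
    · rw [hM']
      simp only [h, dif_pos]
      rw [Finset.card_erase_of_mem ((Mset y I j).max'_mem h)]
      have : 1 ≤ (Mset y I j).card := Finset.card_pos.2 h
      omega
    · rw [Finset.not_nonempty_iff_eq_empty.1 h]
      simp
  have hdisj : ∀ j ∈ (univ : Finset (Fin m)), ∀ j' ∈ (univ : Finset (Fin m)), j ≠ j' →
      Disjoint (M' j) (M' j') := by
    have key : ∀ j j' : Fin m, j < j' → Disjoint (M' j) (M' j') := by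
      intro j j' hjj
      rw [Finset.disjoint_left]
      intro i hij hij'
      by_cases h : (Mset y I j).Nonempty
      · by_cases h' : (Mset y I j').Nonempty
        · rw [hM'] at hij hij'
          simp only [h, dif_pos] at hij
          simp only [h', dif_pos] at hij'
          have hi1 : i ∈ Mset y I j := Finset.mem_of_mem_erase hij
          have hi2 : i ≠ (Mset y I j).max' h := Finset.ne_of_mem_erase hij
          have hle : i ≤ (Mset y I j).max' h := (Mset y I j).le_max' i hi1
          have hlt : i < (Mset y I j).max' h := lt_of_le_of_ne hle hi2
          have hge : (Mset y I j).max' h ≤ i :=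
            Mset_cross hy hILT hjj ((Mset y I j).max'_mem h) (Finset.mem_of_mem_erase hij')
          exact absurd (lt_of_lt_of_le hlt hge) (lt_irrefl i)
        · rw [hM'] at hij'; simp [h'] at hij'
      · rw [hM'] at hij; simp [h] at hij
    intro j _ j' _ hne
    rcases lt_or_gt_of_ne hne with h | h
    · exact key j j' h
    · exact (key j' j h).symm
  have hM'sum : ∑ j, (M' j).card ≤ k := by
    calc ∑ j, (M' j).card = (univ.biUnion M').card := (Finset.card_biUnion hdisj).symm
      _ ≤ k := by
          have := Finset.card_le_univ (univ.biUnion M')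
          simpa using this
  calc ∑ j, (Mset y I j).card ≤ ∑ j, ((M' j).card + 1) := Finset.sum_le_sum fun j _ => hcard j
    _ = (∑ j, (M' j).card) + m := by rw [Finset.sum_add_distrib]; simp
    _ ≤ k + m := by omega

lemma Bset_subset_Mset (j : Fin m) : Bset y I j ⊆ Mset y I j := by
  intro i hi
  exact mem_Mset.2 (mem_Bset.1 hi).1

end Count

section Helpers

lemma mean_ineq {m : ℕ} {p : ℝ} (hp : 1 ≤ p) (hm : (0:ℝ) < (m:ℝ))
    (α : Fin m → ℝ) (hα : ∀ j, 0 ≤ α j) {K : ℝ} (hK : ∑ j, α j ≤ K) (hK0 : 0 ≤ K) :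
    (1/(m:ℝ)) * ∑ j, α j ^ (1/p) ≤ (K/(m:ℝ)) ^ (1/p) := by
  have hp0 : (0:ℝ) < p := lt_of_lt_of_le one_pos hp
  have hq0 : (0:ℝ) < 1/p := by positivity
  have h1 : ∑ j : Fin m, (1/(m:ℝ)) * (α j ^ (1/p)) ≤
      (∑ j : Fin m, (1/(m:ℝ)) * ((α j ^ (1/p)) ^ p)) ^ (1/p) :=
    Real.arith_mean_le_rpow_mean univ (fun _ => 1/(m:ℝ)) (fun j => α j ^ (1/p))
      (fun j _ => by positivity)
      (by rw [Finset.sum_const, Finset.card_univ, Fintype.card_fin, nsmul_eq_mul]; field_simp)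
      (fun j _ => Real.rpow_nonneg (hα j) _) hp
  have e3 : ∀ j : Fin m, (α j ^ (1/p)) ^ p = α j := by
    intro j
    rw [← Real.rpow_mul (hα j), one_div_mul_cancel hp0.ne', Real.rpow_one]
  have h2 : ∑ j : Fin m, (1/(m:ℝ)) * ((α j ^ (1/p)) ^ p) = (1/(m:ℝ)) * ∑ j, α j := by
    rw [Finset.sum_congr rfl (fun j _ => by rw [e3 j]), Finset.mul_sum]
  rw [h2] at h1
  have h3 : (1/(m:ℝ)) * ∑ j, α j ≤ K/(m:ℝ) := by
    calc (1/(m:ℝ)) * ∑ j, α j ≤ (1/(m:ℝ)) * K :=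
          mul_le_mul_of_nonneg_left hK (by positivity)
      _ = K/(m:ℝ) := by rw [one_div_mul_eq_div]
  calc (1/(m:ℝ)) * ∑ j, α j ^ (1/p) = ∑ j : Fin m, (1/(m:ℝ)) * (α j ^ (1/p)) :=
        Finset.mul_sum _ _ _
    _ ≤ ((1/(m:ℝ)) * ∑ j, α j) ^ (1/p) := h1
    _ ≤ (K/(m:ℝ)) ^ (1/p) := Real.rpow_le_rpow
        (mul_nonneg (by positivity) (Finset.sum_nonneg fun j _ => hα j)) h3 hq0.le

lemma rpow_neg_mul_div {q kc mc : ℝ} (hk : 0 < kc) (hm : 0 < mc) :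
    kc ^ (-q) * ((kc/mc) ^ q) = mc ^ (-q) := by
  rw [Real.div_rpow hk.le hm.le, Real.rpow_neg hk.le, Real.rpow_neg hm.le]
  have h1 : kc ^ q ≠ 0 := (Real.rpow_pos_of_pos hk q).ne'
  field_simp

lemma caseA {q kc mc S : ℝ} (hq0 : 0 < q) (hq1 : q ≤ 1) (hk : 0 < kc) (hm : 0 < mc)
    (hkm : kc ≤ mc) (hS : S ≤ kc + mc) :
    kc ^ (-q) * ((1/mc) * S) ≤ mc ^ (-q) + kc ^ (-q) := by
  have hc : 0 ≤ kc ^ (-q) := Real.rpow_nonneg hk.le _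
  have h1 : kc ^ (-q) * ((1/mc) * S) ≤ kc ^ (-q) * ((1/mc) * (kc + mc)) := by
    apply mul_le_mul_of_nonneg_left _ hc
    exact mul_le_mul_of_nonneg_left hS (by positivity)
  refine h1.trans ?_
  have hmne : mc ≠ 0 := hm.ne'
  have e1 : kc ^ (-q) * ((1/mc) * (kc + mc)) = (kc ^ (-q) * kc)/mc + kc ^ (-q) := by
    field_simp
  rw [e1]
  have e2 : kc ^ (-q) * kc = kc ^ (1-q) := by
    rw [show (1-q) = -q + 1 by ring, Real.rpow_add hk, Real.rpow_one]
  have h2 : kc ^ (1-q) ≤ mc ^ (1-q) := Real.rpow_le_rpow hk.le hkm (by linarith)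
  have e3 : mc ^ (1-q) = mc ^ (-q) * mc := by
    rw [show (1-q) = -q + 1 by ring, Real.rpow_add hm, Real.rpow_one]
  calc (kc ^ (-q) * kc)/mc + kc ^ (-q) ≤ mc ^ (1-q)/mc + kc ^ (-q) := by
        refine add_le_add ?_ le_rfl
        apply (div_le_div_iff_of_pos_right hm).2
        rw [e2]; exact h2
    _ = mc ^ (-q) + kc ^ (-q) := by rw [e3, mul_div_cancel_right₀ _ hmne]

lemma caseB {q kc mc S : ℝ} (hq0 : 0 < q) (hk : 0 < kc) (hm : 0 < mc)
    (hmk : mc ≤ kc) (hS : S ≤ 2*mc) :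
    kc ^ (-q) * ((1/mc) * S) ≤ 2 * mc ^ (-q) := by
  have hmne : mc ≠ 0 := hm.ne'
  have h7 : kc ^ (-q) ≤ mc ^ (-q) := by
    rw [Real.rpow_neg hk.le, Real.rpow_neg hm.le]
    exact inv_anti₀ (Real.rpow_pos_of_pos hm q) (Real.rpow_le_rpow hm.le hmk hq0.le)
  calc kc ^ (-q) * ((1/mc) * S) ≤ kc ^ (-q) * ((1/mc) * (2*mc)) :=
        mul_le_mul_of_nonneg_left (mul_le_mul_of_nonneg_left hS (by positivity))
          (Real.rpow_nonneg hk.le _)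
    _ = 2 * kc ^ (-q) := by field_simp
    _ ≤ 2 * mc ^ (-q) := by linarith

end Helpers

section Main

variable {N : C00 → ℝ}

lemma perFamily (hN : IsNorm N) (hEq : Eq22 N) {p : ℝ} (hp : 1 ≤ p)
    {k : ℕ} (y : Fin k → C00) (hy : BlockSeqFin y) (hy1 : ∀ i, N (y i) = 1)
    (hup : ∀ a : Fin k → ℝ, N (∑ i, a i • y i) ≤ 2 * (∑ i, |a i| ^ p) ^ (1 / p))
    {x : C00} (hxdef : x = ((k : ℝ) ^ (-(1 / p))) • ∑ i, y i)
    (m : ℕ) (F : Fin m → Finset ℕ)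
    (hFlt : ∀ i j : Fin m, i < j → FinsetLT (F i) (F j)) :
    (1 / (m : ℝ)) * ∑ j, N (restr (F j) x) ≤
      4 * (m : ℝ) ^ (-(1 / p)) + (k : ℝ) ^ (-(1 / p)) := by
  classical
  have hp0 : (0:ℝ) < p := lt_of_lt_of_le one_pos hp
  have hq0 : (0:ℝ) < 1/p := by positivity
  have hq1 : (1:ℝ)/p ≤ 1 := by rw [div_le_one hp0]; exact hp
  have hRHS : (0:ℝ) ≤ 4 * (m : ℝ) ^ (-(1 / p)) + (k : ℝ) ^ (-(1 / p)) := by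
    have h1 : (0:ℝ) ≤ (m : ℝ) ^ (-(1 / p)) := Real.rpow_nonneg (Nat.cast_nonneg m) _
    have h2 : (0:ℝ) ≤ (k : ℝ) ^ (-(1 / p)) := Real.rpow_nonneg (Nat.cast_nonneg k) _
    linarith
  rcases Nat.eq_zero_or_pos k with hk0 | hk
  · subst hk0
    have hx0 : x = 0 := by rw [hxdef]; simp
    subst hx0
    simp only [restr_zero, N_zero hN]
    simpa using hRHS
  rcases Nat.eq_zero_or_pos m with hm0 | hm
  · subst hm0
    simpa using hRHS
  have hkc : (0:ℝ) < (k:ℝ) := by exact_mod_cast hk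
  have hmc : (0:ℝ) < (m:ℝ) := by exact_mod_cast hm
  have hc : (0:ℝ) ≤ (k : ℝ) ^ (-(1 / p)) := Real.rpow_nonneg (Nat.cast_nonneg k) _
  -- interval hulls
  set I : Fin m → Finset ℕ := fun j =>
    if h : (F j).Nonempty then Finset.Icc ((F j).min' h) ((F j).max' h) else ∅ with hI
  have hFI : ∀ j, F j ⊆ I j := by
    intro j a ha
    have hne : (F j).Nonempty := ⟨a, ha⟩
    simp only [hI, dif_pos hne, Finset.mem_Icc]
    exact ⟨Finset.min'_le _ a ha, Finset.le_max' _ a ha⟩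
  have hILT : ∀ j j' : Fin m, j < j' → FinsetLT (I j) (I j') := by
    intro j j' hjj a ha b hb
    simp only [hI] at ha hb
    by_cases h1 : (F j).Nonempty
    · by_cases h2 : (F j').Nonempty
      · simp only [dif_pos h1, Finset.mem_Icc] at ha
        simp only [dif_pos h2, Finset.mem_Icc] at hb
        have := hFlt j j' hjj ((F j).max' h1) ((F j).max'_mem h1)
          ((F j').min' h2) ((F j').min'_mem h2)
        omega
      · simp [dif_neg h2] at hb
    · simp [dif_neg h1] at ha
  have hconv : ∀ (j : Fin m), ∀ a ∈ I j, ∀ b ∈ I j, ∀ c : ℕ, a ≤ c → c ≤ b → c ∈ I j := by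
    intro j a ha b hb c hac hcb
    simp only [hI] at ha hb ⊢
    by_cases h1 : (F j).Nonempty
    · simp only [dif_pos h1, Finset.mem_Icc] at ha hb ⊢
      omega
    · simp [dif_neg h1] at ha
  set αr : Fin m → ℝ := fun j => ((Aset y I j).card : ℝ) with hαr
  set βr : Fin m → ℝ := fun j => ((Bset y I j).card : ℝ) with hβr
  -- per-j bound
  have key : ∀ j, N (restr (F j) x) ≤
      (k : ℝ) ^ (-(1 / p)) * (2 * αr j ^ (1/p) + βr j) := by
    intro j
    have step1 : N (restr (F j) x) ≤ N (restr (I j) x) := by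
      have heq : restr (F j) x = restr (F j) (restr (I j) x) := by
        rw [restr_restr, Finset.inter_eq_left.2 (hFI j)]
      rw [heq]
      exact N_restr_le hN hEq _ _
    refine step1.trans ?_
    have hxIj : restr (I j) x = ((k : ℝ) ^ (-(1 / p))) •
        (∑ i ∈ Aset y I j, y i + ∑ i ∈ Bset y I j, restr (I j) (y i)) := by
      rw [hxdef, restr_smul, restr_sum]
      congr 1
      have h1 : ∑ i : Fin k, restr (I j) (y i) = ∑ i ∈ Mset y I j, restr (I j) (y i) := by
        symm
        apply Finset.sum_subset (Finset.subset_univ _)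
        intro i _ hi
        apply restr_eq_zero
        intro t ht
        rw [mem_Mset, not_not] at hi
        exact Finset.disjoint_left.1 hi ht
      rw [h1, ← Aset_union_Bset (y := y) (I := I) j, Finset.sum_union (Aset_disj_Bset j)]
      congr 1
      apply Finset.sum_congr rfl
      intro i hi
      exact restr_eq_self _ _ (mem_Aset.1 hi).2
    rw [hxIj, hN.2.1, abs_of_nonneg hc]
    apply mul_le_mul_of_nonneg_left _ hc
    have t1 : N (∑ i ∈ Aset y I j, y i) ≤ 2 * αr j ^ (1/p) := by
      have hu := hup (fun i => if i ∈ Aset y I j then (1:ℝ) else 0)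
      have e1 : (∑ i : Fin k, (if i ∈ Aset y I j then (1:ℝ) else 0) • y i)
          = ∑ i ∈ Aset y I j, y i := by
        simp only [ite_smul, one_smul, zero_smul]
        rw [Finset.sum_ite_mem, Finset.univ_inter]
      have e2 : (∑ i : Fin k, |if i ∈ Aset y I j then (1:ℝ) else 0| ^ p) = αr j := by
        have h2 : ∀ i : Fin k, |if i ∈ Aset y I j then (1:ℝ) else 0| ^ p
            = if i ∈ Aset y I j then (1:ℝ) else 0 := by
          intro i
          by_cases h : i ∈ Aset y I j
          · simp [h, Real.one_rpow]
          · simp [h, Real.zero_rpow hp0.ne']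
        rw [Finset.sum_congr rfl fun i _ => h2 i]
        rw [Finset.sum_ite_mem, Finset.univ_inter, Finset.sum_const, hαr]
        simp
      rw [e1, e2] at hu
      exact hu
    have t2 : N (∑ i ∈ Bset y I j, restr (I j) (y i)) ≤ βr j := by
      refine (N_sum hN _ _).trans ?_
      have h3 : ∀ i ∈ Bset y I j, N (restr (I j) (y i)) ≤ 1 := by
        intro i _
        have := N_restr_le hN hEq (I j) (y i)
        rwa [hy1 i] at this
      calc ∑ i ∈ Bset y I j, N (restr (I j) (y i)) ≤ ∑ _i ∈ Bset y I j, (1:ℝ) :=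
            Finset.sum_le_sum h3
        _ = βr j := by rw [Finset.sum_const, hβr]; simp
    calc N (∑ i ∈ Aset y I j, y i + ∑ i ∈ Bset y I j, restr (I j) (y i))
        ≤ N (∑ i ∈ Aset y I j, y i) + N (∑ i ∈ Bset y I j, restr (I j) (y i)) := hN.1 _ _
      _ ≤ 2 * αr j ^ (1/p) + βr j := add_le_add t1 t2
  -- sum the per-j bounds
  have hsum : ∑ j, N (restr (F j) x) ≤
      (k : ℝ) ^ (-(1 / p)) * (2 * ∑ j, αr j ^ (1/p) + ∑ j, βr j) := by
    calc ∑ j, N (restr (F j) x)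
        ≤ ∑ j, (k : ℝ) ^ (-(1 / p)) * (2 * αr j ^ (1/p) + βr j) :=
          Finset.sum_le_sum fun j _ => key j
      _ = (k : ℝ) ^ (-(1 / p)) * (2 * ∑ j, αr j ^ (1/p) + ∑ j, βr j) := by
          rw [← Finset.mul_sum]
          congr 1
          rw [Finset.sum_add_distrib, Finset.mul_sum]
  have hαsum : ∑ j, αr j ≤ (k:ℝ) := by
    have h4 := Aset_sum_card hy hILT
    calc ∑ j, αr j = ((∑ j, (Aset y I j).card : ℕ) : ℝ) := by rw [Nat.cast_sum]
      _ ≤ (k:ℝ) := by exact_mod_cast h4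
  have hα0 : ∀ j, (0:ℝ) ≤ αr j := fun j => Nat.cast_nonneg _
  have hmean := mean_ineq hp hmc αr hα0 hαsum hkc.le
  have hApart : 2 * (k : ℝ) ^ (-(1 / p)) * ((1/(m:ℝ)) * ∑ j, αr j ^ (1/p))
      ≤ 2 * (m:ℝ) ^ (-(1/p)) := by
    calc 2 * (k : ℝ) ^ (-(1 / p)) * ((1/(m:ℝ)) * ∑ j, αr j ^ (1/p))
        ≤ 2 * (k : ℝ) ^ (-(1 / p)) * (((k:ℝ)/(m:ℝ)) ^ (1/p)) :=
          mul_le_mul_of_nonneg_left hmean (by positivity)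
      _ = 2 * ((k : ℝ) ^ (-(1 / p)) * (((k:ℝ)/(m:ℝ)) ^ (1/p))) := by ring
      _ = 2 * (m:ℝ) ^ (-(1/p)) := by rw [rpow_neg_mul_div hkc hmc]
  have hBpart : (k : ℝ) ^ (-(1 / p)) * ((1/(m:ℝ)) * ∑ j, βr j)
      ≤ 2 * (m:ℝ) ^ (-(1/p)) + (k:ℝ) ^ (-(1/p)) := by
    have hβ0 : (0:ℝ) ≤ ∑ j, βr j := Finset.sum_nonneg fun j _ => Nat.cast_nonneg _
    have hmnonneg : (0:ℝ) ≤ (m : ℝ) ^ (-(1 / p)) := Real.rpow_nonneg (Nat.cast_nonneg m) _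
    rcases le_or_gt k m with hkm | hmk
    · have hβsum : ∑ j, βr j ≤ (k:ℝ) + (m:ℝ) := by
        have h5 : ∑ j, (Bset y I j).card ≤ k + m := by
          refine le_trans (Finset.sum_le_sum fun j _ =>
            Finset.card_le_card (Bset_subset_Mset j)) ?_
          exact Mset_sum_card hy hILT
        calc ∑ j, βr j = ((∑ j, (Bset y I j).card : ℕ) : ℝ) := by rw [Nat.cast_sum]
          _ ≤ (k:ℝ) + (m:ℝ) := by exact_mod_cast h5
      have h6 := caseA hq0 hq1 hkc hmc (by exact_mod_cast hkm) hβsum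
      refine h6.trans ?_
      linarith
    · have hβsum : ∑ j, βr j ≤ 2 * (m:ℝ) := by
        have h5 : ∀ j, (Bset y I j).card ≤ 2 := Bset_card_le_two hy hconv
        calc ∑ j, βr j ≤ ∑ _j : Fin m, (2:ℝ) := Finset.sum_le_sum fun j _ => by
              show ((Bset y I j).card : ℝ) ≤ 2
              exact_mod_cast h5 j
          _ = 2 * (m:ℝ) := by
              rw [Finset.sum_const, Finset.card_univ, Fintype.card_fin, nsmul_eq_mul]
              ring
      have h6 := caseB hq0 hkc hmc (by exact_mod_cast hmk.le) hβsum
      refine h6.trans ?_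
      linarith
  calc (1 / (m : ℝ)) * ∑ j, N (restr (F j) x)
      ≤ (1 / (m:ℝ)) * ((k : ℝ) ^ (-(1 / p)) * (2 * ∑ j, αr j ^ (1/p) + ∑ j, βr j)) :=
        mul_le_mul_of_nonneg_left hsum (by positivity)
    _ = 2 * (k : ℝ) ^ (-(1 / p)) * ((1/(m:ℝ)) * ∑ j, αr j ^ (1/p))
        + (k : ℝ) ^ (-(1 / p)) * ((1/(m:ℝ)) * ∑ j, βr j) := by ring
    _ ≤ 2 * (m:ℝ) ^ (-(1/p)) + (2 * (m:ℝ) ^ (-(1/p)) + (k:ℝ) ^ (-(1/p))) :=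
        add_le_add hApart hBpart
    _ ≤ 4 * (m : ℝ) ^ (-(1 / p)) + (k : ℝ) ^ (-(1 / p)) := by linarith

end Main

section Final

lemma rpow_neg_anti {q a b : ℝ} (hq : 0 ≤ q) (hb : 0 < b) (hba : b ≤ a) :
    a ^ (-q) ≤ b ^ (-q) := by
  have ha : 0 < a := lt_of_lt_of_le hb hba
  rw [Real.rpow_neg ha.le, Real.rpow_neg hb.le]
  exact inv_anti₀ (Real.rpow_pos_of_pos hb q) (Real.rpow_le_rpow hb.le hba hq)

lemma geomSumLe {γ : ℝ} (h0 : 0 ≤ γ) (h1 : γ < 1) (n : ℕ) :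
    ∑ t ∈ Finset.range n, γ ^ t ≤ (1 - γ)⁻¹ := by
  have hsummable := summable_geometric_of_lt_one h0 h1
  have := Summable.sum_le_tsum (Finset.range n) (fun i _ => pow_nonneg h0 i) hsummable
  rwa [tsum_geometric_of_lt_one h0 h1] at this

variable {N : C00 → ℝ}

/-- geometric bound for the sum of `(m i)^(-1/p)` over the nonvanishing indices -/
lemma admissible_geom_sum {p : ℝ} (hp : 1 ≤ p) {ℓ : ℕ} (m : Fin ℓ → ℕ)
    (E : Fin ℓ → Finset ℕ) (hadm : Admissible ℓ m E) (x : C00) :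
    ∑ i ∈ Finset.univ.filter (fun i => restr (E i) x ≠ 0), ((m i : ℝ)) ^ (-(1/p))
      ≤ (1 - (2:ℝ) ^ (-(1/p)))⁻¹ := by
  classical
  have hp0 : (0:ℝ) < p := lt_of_lt_of_le one_pos hp
  have hq0 : (0:ℝ) < 1/p := by positivity
  set γ : ℝ := (2:ℝ) ^ (-(1/p)) with hγ
  have hγ0 : 0 ≤ γ := Real.rpow_nonneg (by norm_num) _
  have hγ1 : γ < 1 := Real.rpow_lt_one_of_one_lt_of_neg one_lt_two (by linarith)
  set S : Finset (Fin ℓ) := Finset.univ.filter (fun i => restr (E i) x ≠ 0) with hS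
  set c : Fin ℓ → ℕ := fun i => (S.filter (fun j => j < i)).card with hc
  -- each `E t`, `t ∈ S`, is nonempty
  have hEne : ∀ t ∈ S, 1 ≤ (E t).card := by
    intro t ht
    rw [hS, Finset.mem_filter] at ht
    rcases Finset.eq_empty_or_nonempty (E t) with he | he
    · exact absurd (he ▸ restr_empty x) ht.2
    · exact Finset.card_pos.2 he
  -- key: 2 ^ (c i) ≤ m i for i ∈ S
  have hkey : ∀ i ∈ S, (2:ℕ) ^ (c i) ≤ m i := by
    intro i hi
    rcases Nat.eq_zero_or_pos (c i) with h0 | hpos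
    · rw [h0, pow_zero]
      have := hadm.1 i
      omega
    · -- there is j ∈ S with j < i, so (i:ℕ) ≥ 1
      have hipos : 1 ≤ (i : ℕ) := by
        rcases Finset.card_pos.1 hpos with ⟨j, hj⟩
        have hji : j < i := (Finset.mem_filter.1 hj).2
        have : (j:ℕ) < (i:ℕ) := hji
        omega
      set i' : Fin ℓ := ⟨(i:ℕ) - 1, by omega⟩ with hi'
      have hstep := hadm.2.2.2 i' i (by simp [hi']; omega)
      -- lower bound the sum of cards
      have hlow : ((c i : ℕ) : ℝ) ≤ ∑ t ∈ Finset.Iic i', ((E t).card : ℝ) := by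
        have hsub : S.filter (fun j => j < i) ⊆ Finset.Iic i' := by
          intro t ht
          rw [Finset.mem_Iic]
          have hti : t < i := (Finset.mem_filter.1 ht).2
          have : (t:ℕ) < (i:ℕ) := hti
          show (t : ℕ) ≤ ((i:ℕ) - 1)
          omega
        calc ((c i : ℕ) : ℝ) = ∑ _t ∈ S.filter (fun j => j < i), (1:ℝ) := by
              rw [Finset.sum_const, nsmul_eq_mul, mul_one, hc]
          _ ≤ ∑ t ∈ S.filter (fun j => j < i), ((E t).card : ℝ) := by
              apply Finset.sum_le_sum
              intro t ht
              have := hEne t (Finset.mem_of_mem_filter t ht)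
              exact_mod_cast this
          _ ≤ ∑ t ∈ Finset.Iic i', ((E t).card : ℝ) :=
              Finset.sum_le_sum_of_subset_of_nonneg hsub
                (fun t _ _ => Nat.cast_nonneg _)
      have hflt : ((c i : ℕ) : ℝ) < f (m i) := lt_of_le_of_lt hlow hstep
      -- convert to the claimed power bound
      have h2 : (2:ℝ) ^ ((c i : ℕ) : ℝ) < 1 + (m i : ℝ) := by
        rw [f] at hflt
        have hpos' : (0:ℝ) < 1 + (m i : ℝ) := by positivity
        exact (Real.lt_logb_iff_rpow_lt one_lt_two hpos').1 hflt
      have h3 : ((2:ℕ) ^ (c i) : ℝ) < 1 + (m i : ℝ) := by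
        rw [Real.rpow_natCast] at h2
        exact_mod_cast h2
      have h4 : (2:ℕ) ^ (c i) < 1 + m i := by exact_mod_cast h3
      omega
  -- c is strictly monotone on S
  have hmono : ∀ i ∈ S, ∀ j ∈ S, i < j → c i < c j := by
    intro i hi j hj hij
    apply Finset.card_lt_card
    rw [Finset.ssubset_iff_of_subset]
    · exact ⟨i, Finset.mem_filter.2 ⟨hi, hij⟩, fun hmem =>
        absurd (Finset.mem_filter.1 hmem).2 (lt_irrefl i)⟩
    · intro t ht
      rcases Finset.mem_filter.1 ht with ⟨ht1, ht2⟩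
      exact Finset.mem_filter.2 ⟨ht1, ht2.trans hij⟩
  have hinj : Set.InjOn c S := by
    intro i hi j hj hij
    by_contra hne
    rcases lt_or_gt_of_ne hne with h | h
    · exact absurd hij (hmono i hi j hj h).ne
    · exact absurd hij.symm (hmono j hj i hi h).ne
  have hterm : ∀ i ∈ S, ((m i : ℝ)) ^ (-(1/p)) ≤ γ ^ (c i) := by
    intro i hi
    have h5 : ((2:ℝ) ^ (c i : ℕ)) ≤ (m i : ℝ) := by exact_mod_cast hkey i hi
    have h6 : ((m i : ℝ)) ^ (-(1/p)) ≤ ((2:ℝ) ^ (c i : ℕ)) ^ (-(1/p)) :=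
      rpow_neg_anti hq0.le (by positivity) h5
    refine h6.trans ?_
    rw [hγ, ← Real.rpow_natCast (2:ℝ) (c i), ← Real.rpow_mul (by norm_num : (0:ℝ) ≤ 2),
      mul_comm ((c i : ℕ):ℝ) (-(1/p)), Real.rpow_mul (by norm_num : (0:ℝ) ≤ 2),
      Real.rpow_natCast]
  calc ∑ i ∈ S, ((m i : ℝ)) ^ (-(1/p)) ≤ ∑ i ∈ S, γ ^ (c i) :=
        Finset.sum_le_sum hterm
    _ = ∑ t ∈ S.image c, γ ^ t := (Finset.sum_image (fun i hi j hj => hinj hi hj)).symm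
    _ ≤ ∑ t ∈ Finset.range ℓ, γ ^ t := by
        apply Finset.sum_le_sum_of_subset_of_nonneg
        · intro t ht
          rcases Finset.mem_image.1 ht with ⟨i, hi, rfl⟩
          rw [Finset.mem_range, hc]
          calc (S.filter (fun j => j < i)).card < Finset.univ.card := by
                apply Finset.card_lt_card
                rw [Finset.ssubset_iff_of_subset (Finset.subset_univ _)]
                exact ⟨i, Finset.mem_univ i, fun hmem =>
                  absurd (Finset.mem_filter.1 hmem).2 (lt_irrefl i)⟩
            _ = ℓ := by rw [Finset.card_univ, Fintype.card_fin]
        · intro t _ _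
          exact pow_nonneg hγ0 t
    _ ≤ (1 - γ)⁻¹ := geomSumLe hγ0 hγ1 ℓ

end Final

/-- Step 2. -/
theorem statement13 (N : C00 → ℝ) (hN : IsNorm N) (hEq : Eq22 N)
    (p : ℝ) (hp : 1 ≤ p) (k m ℓ : ℕ) (x : C00) (hx : IsLpAverage N p k 2 x) :
    tnorm N m x ≤ 4 * (m : ℝ) ^ (-(1 / p)) + (k : ℝ) ^ (-(1 / p)) ∧
    normL N ℓ x ≤ (1 / f ℓ) * (Cp p + 2 * ℓ * (k : ℝ) ^ (-(1 / p))) := by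
  classical
  obtain ⟨y, hy, hy1, hbounds, hxdef⟩ := hx
  have hup : ∀ a : Fin k → ℝ, N (∑ i, a i • y i) ≤ 2 * (∑ i, |a i| ^ p) ^ (1/p) :=
    fun a => (hbounds a).2
  have hp0 : (0:ℝ) < p := lt_of_lt_of_le one_pos hp
  have hq0 : (0:ℝ) < 1/p := by positivity
  have hknn : (0:ℝ) ≤ (k:ℝ) ^ (-(1/p)) := Real.rpow_nonneg (Nat.cast_nonneg k) _
  have haux : ∀ (m' : ℕ) (G : Finset ℕ),
      tnorm N m' (restr G x) ≤ 4 * (m' : ℝ) ^ (-(1/p)) + (k:ℝ) ^ (-(1/p)) := by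
    intro m' G
    have hb : (0:ℝ) ≤ 4 * (m' : ℝ) ^ (-(1/p)) + (k:ℝ) ^ (-(1/p)) := by
      have := Real.rpow_nonneg (Nat.cast_nonneg m') (-(1/p))
      linarith
    apply tnorm_le hN hb
    intro F hF
    rw [Finset.sum_congr rfl (fun j _ => by rw [restr_restr])]
    exact perFamily hN hEq hp y hy hy1 hup hxdef m' (fun j => F j ∩ G)
      (fun a b hab => finsetLT_mono (hF a b hab) Finset.inter_subset_left
        Finset.inter_subset_left)
  have hγ1 : (2:ℝ) ^ (-(1/p)) < 1 :=
    Real.rpow_lt_one_of_one_lt_of_neg one_lt_two (by linarith)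
  have hγ0 : (0:ℝ) ≤ (2:ℝ) ^ (-(1/p)) := Real.rpow_nonneg (by norm_num) _
  have hCp : (0:ℝ) ≤ Cp p := by
    rw [Cp]
    have : (0:ℝ) < 1 - (2:ℝ) ^ (-(1/p)) := by linarith
    positivity
  constructor
  · have h := haux m x.support
    rwa [restr_eq_self _ _ (subset_refl _)] at h
  · have hfnn : (0:ℝ) ≤ 1 / f ℓ := by
      have := f_nonneg ℓ
      positivity
    have hRHSb : (0:ℝ) ≤ Cp p + 2 * ℓ * (k:ℝ) ^ (-(1/p)) := by
      have h1 : (0:ℝ) ≤ 2 * (ℓ:ℝ) * (k:ℝ) ^ (-(1/p)) := by positivity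
      linarith
    apply Real.sSup_le _ (mul_nonneg hfnn hRHSb)
    rintro r ⟨mm, E, hadm, rfl⟩
    apply mul_le_mul_of_nonneg_left _ hfnn
    set S : Finset (Fin ℓ) := Finset.univ.filter (fun i => restr (E i) x ≠ 0) with hS
    have hsplit : ∑ i, tnorm N (mm i) (restr (E i) x) ≤
        ∑ i ∈ S, (4 * (mm i : ℝ) ^ (-(1/p)) + (k:ℝ) ^ (-(1/p))) := by
      rw [← Finset.sum_filter_add_sum_filter_not Finset.univ
        (fun i => restr (E i) x ≠ 0) (fun i => tnorm N (mm i) (restr (E i) x))]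
      have h1 : ∑ i ∈ S, tnorm N (mm i) (restr (E i) x) ≤
          ∑ i ∈ S, (4 * (mm i : ℝ) ^ (-(1/p)) + (k:ℝ) ^ (-(1/p))) :=
        Finset.sum_le_sum fun i _ => haux (mm i) (E i)
      have h2 : ∑ i ∈ Finset.univ.filter (fun i => ¬ restr (E i) x ≠ 0),
          tnorm N (mm i) (restr (E i) x) ≤ 0 := by
        apply Finset.sum_nonpos
        intro i hi
        have : restr (E i) x = 0 := not_not.1 (Finset.mem_filter.1 hi).2
        rw [this]
        exact tnorm_zero_le hN (mm i)
      have := add_le_add h1 h2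
      simpa using this
    refine hsplit.trans ?_
    have hgeom := admissible_geom_sum hp mm E hadm x
    have hcard : (S.card : ℝ) ≤ (ℓ:ℝ) := by
      have := Finset.card_le_univ S
      have h3 : S.card ≤ ℓ := by simpa using this
      exact_mod_cast h3
    calc ∑ i ∈ S, (4 * (mm i : ℝ) ^ (-(1/p)) + (k:ℝ) ^ (-(1/p)))
        = 4 * (∑ i ∈ S, (mm i : ℝ) ^ (-(1/p))) + (S.card : ℝ) * (k:ℝ) ^ (-(1/p)) := by
          rw [Finset.sum_add_distrib, Finset.sum_const, ← Finset.mul_sum, nsmul_eq_mul]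
      _ ≤ 4 * (1 - (2:ℝ) ^ (-(1/p)))⁻¹ + (ℓ:ℝ) * (k:ℝ) ^ (-(1/p)) := by
          have h4 : 4 * (∑ i ∈ S, (mm i : ℝ) ^ (-(1/p))) ≤ 4 * (1 - (2:ℝ) ^ (-(1/p)))⁻¹ := by
            apply mul_le_mul_of_nonneg_left _ (by norm_num)
            exact hgeom
          have h5 : (S.card : ℝ) * (k:ℝ) ^ (-(1/p)) ≤ (ℓ:ℝ) * (k:ℝ) ^ (-(1/p)) :=
            mul_le_mul_of_nonneg_right hcard hknn
          linarith
      _ ≤ Cp p + 2 * ℓ * (k:ℝ) ^ (-(1/p)) := by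
          rw [Cp]
          have h6 : (ℓ:ℝ) * (k:ℝ) ^ (-(1/p)) ≤ 2 * ℓ * (k:ℝ) ^ (-(1/p)) := by
            have : (0:ℝ) ≤ (ℓ:ℝ) * (k:ℝ) ^ (-(1/p)) := by positivity
            linarith
          linarith
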